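/- Let v be a splitting vertex of a finite simple graph G with N(v) = {v_1,…,v_d}, and regard G_(v) as a graph on the vertex set consisting of {v_1,…,v_d} together with all vertices not in N(v)∪{v} that are adjacent in G to some v_i. Let q ≥ 5 be an integer. If every minimal cycle of the complement graph G^c has length at least q, then every minimal cycle of (G_(v))^c (the complement of G_(v) on the vertex set of G_(v)) has length at least q − 1. -/

import Mathlib

variable {V : Type*}

/-- The graph obtained from `G` by deleting the vertices in `S`
(and all edges incident to them). -/
def delVerts (G : SimpleGraph V) (S : Set V) : SimpleGraph V where
  Adj x y := G.Adj x y ∧ x ∉ S ∧ y ∉ S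
  symm := ⟨fun _ _ h => ⟨h.1.symm, h.2.2, h.2.1⟩⟩
  loopless := ⟨fun x h => G.irrefl h.1⟩

/-- The graph `G_(v)`: its edges are the edges of the induced subgraph of `G`
on `N(v)` together with all edges of `G` incident to some neighbor of `v` but
not incident to `v`. -/
def splitSub (G : SimpleGraph V) (v : V) : SimpleGraph V where
  Adj x y := G.Adj x y ∧ x ≠ v ∧ y ≠ v ∧ (G.Adj v x ∨ G.Adj v y)
  symm := ⟨fun _ _ h => ⟨h.1.symm, h.2.2.1, h.2.1, h.2.2.2.symm⟩⟩
  loopless := ⟨fun x h => G.irrefl h.1⟩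

/-- The complement of the graph `X` taken on the vertex subset `W`:
`x` and `y` are adjacent iff they are distinct vertices of `W` that are not
adjacent in `X`. -/
def complOn (X : SimpleGraph V) (W : Set V) : SimpleGraph V where
  Adj x y := x ∈ W ∧ y ∈ W ∧ x ≠ y ∧ ¬ X.Adj x y
  symm := ⟨fun _ _ h => ⟨h.2.1, h.1, h.2.2.1.symm, fun hadj => h.2.2.2 hadj.symm⟩⟩
  loopless := ⟨fun x h => h.2.2.1 rfl⟩

/-- `X` has a minimal (induced, chordless) cycle of length `ℓ ≥ 4`: an
injective family `c : ZMod ℓ → V` with consecutive vertices adjacent and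
non-consecutive vertices nonadjacent (no chord). -/
def HasMinimalCycle (X : SimpleGraph V) (ℓ : ℕ) : Prop :=
  4 ≤ ℓ ∧ ∃ c : ZMod ℓ → V, Function.Injective c ∧
    (∀ i, X.Adj (c i) (c (i + 1))) ∧
    (∀ i j : ZMod ℓ, j ≠ i → j ≠ i + 1 → i ≠ j + 1 → ¬ X.Adj (c i) (c j))

/-- let `v` be a splitting vertex of `G`, and regard `G_(v)` as
a graph on the vertex set `W` consisting of `N(v)` together with the vertices
outside `N(v) ∪ {v}` adjacent in `G` to some neighbor of `v`. If `q ≥ 5` and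
every minimal cycle of `Gᶜ` has length at least `q`, then every minimal cycle
of `(G_(v))ᶜ` (the complement taken on `W`) has length at least `q - 1`. -/
theorem stmt13 [Fintype V] [DecidableEq V] (G : SimpleGraph V) (v : V)
    (hdeg : (G.neighborSet v).Nonempty)
    (hsplit : ∃ x y, (delVerts G {v}).Adj x y)
    (q : ℕ) (hq : 5 ≤ q)
    (hGc : ∀ ℓ : ℕ, HasMinimalCycle Gᶜ ℓ → q ≤ ℓ) :
    ∀ ℓ : ℕ,
      HasMinimalCycle
        (complOn (splitSub G v)
          (G.neighborSet v ∪
            {w | w ∉ insert v (G.neighborSet v) ∧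
              ∃ vi ∈ G.neighborSet v, G.Adj vi w})) ℓ →
      q - 1 ≤ ℓ := by
  intro ℓ hmc
  obtain ⟨hℓ4, c, hinj, hedge, hchord⟩ := hmc
  haveI : NeZero ℓ := ⟨by omega⟩
  haveI : Fact (1 < ℓ) := ⟨by omega⟩
  haveI : Fact (1 < ℓ + 1) := ⟨by omega⟩
  -- basic facts
  have hvW : v ∉ (G.neighborSet v ∪
      {w | w ∉ insert v (G.neighborSet v) ∧ ∃ vi ∈ G.neighborSet v, G.Adj vi w}) := by
    intro h
    rcases h with h | h
    · exact G.irrefl h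
    · exact h.1 (Set.mem_insert _ _)
  have hW : ∀ m, c m ∈ (G.neighborSet v ∪
      {w | w ∉ insert v (G.neighborSet v) ∧ ∃ vi ∈ G.neighborSet v, G.Adj vi w}) :=
    fun m => (hedge m).1
  have hcv : ∀ m, c m ≠ v := fun m h => hvW (h ▸ hW m)
  have hz : ∀ n : ℕ, 0 < n → n < ℓ → (n : ZMod ℓ) ≠ 0 := by
    intro n h0 h1 h
    have hd := (ZMod.natCast_eq_zero_iff n ℓ).mp h
    have := Nat.le_of_dvd h0 hd
    omega
  have h10 : (1 : ZMod ℓ) ≠ 0 := by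
    have := hz 1 one_pos (by omega); simpa using this
  have h20 : (2 : ZMod ℓ) ≠ 0 := by
    have := hz 2 (by omega) (by omega); simpa using this
  have h30 : (3 : ZMod ℓ) ≠ 0 := by
    have := hz 3 (by omega) (by omega); simpa using this
  have hchordG : ∀ i j : ZMod ℓ, j ≠ i → j ≠ i + 1 → i ≠ j + 1 →
      G.Adj (c i) (c j) ∧ (G.Adj v (c i) ∨ G.Adj v (c j)) := by
    intro i j h1 h2 h3
    have h := hchord i j h1 h2 h3
    have hadj : (splitSub G v).Adj (c i) (c j) := by
      by_contra hns
      exact h ⟨hW i, hW j, fun he => h1 (hinj he).symm, hns⟩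
    exact ⟨hadj.1, hadj.2.2.2⟩
  have hedge' : ∀ m : ZMod ℓ, G.Adj (c m) (c (m + 1)) →
      ¬ G.Adj v (c m) ∧ ¬ G.Adj v (c (m + 1)) := by
    intro m hadj
    have h : ¬ (splitSub G v).Adj (c m) (c (m + 1)) := (hedge m).2.2.2
    constructor
    · intro hv; exact h ⟨hadj, hcv m, hcv (m + 1), Or.inl hv⟩
    · intro hv; exact h ⟨hadj, hcv m, hcv (m + 1), Or.inr hv⟩
  by_cases hbadE : ∃ i₀ : ZMod ℓ, G.Adj (c i₀) (c (i₀ + 1))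
  · -- there is a "bad" edge: insert v to build a minimal cycle of length ℓ+1 in Gᶜ
    obtain ⟨i₀, hbad⟩ := hbadE
    obtain ⟨ho1, ho2⟩ := hedge' i₀ hbad
    have hnbr : ∀ j : ZMod ℓ, j ≠ i₀ → j ≠ i₀ + 1 → G.Adj v (c j) := by
      intro j h1 h2
      by_cases h3 : i₀ = j + 1
      · have hA : j ≠ i₀ + 1 + 1 := by
          intro he
          exact h30 (by linear_combination -he - h3)
        have hB : i₀ + 1 ≠ j + 1 := by
          intro he
          exact h10 (by linear_combination he - h3)
        rcases (hchordG (i₀ + 1) j h2 hA hB).2 with hv | hv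
        · exact absurd hv ho2
        · exact hv
      · rcases (hchordG i₀ j h1 h2 h3).2 with hv | hv
        · exact absurd hv ho1
        · exact hv
    have hgood : ∀ m : ZMod ℓ, m ≠ i₀ → ¬ G.Adj (c m) (c (m + 1)) := by
      intro m hm hadj
      have h := hedge' m hadj
      by_cases hm2 : m = i₀ + 1
      · apply h.2
        apply hnbr (m + 1)
        · intro he; rw [hm2] at he; exact h20 (by linear_combination he)
        · intro he; rw [hm2] at he; exact h10 (by linear_combination he)
      · exact h.1 (hnbr m hm hm2)
    -- build the new cycle of length ℓ + 1
    haveI : NeZero (ℓ + 1) := ⟨Nat.succ_ne_zero ℓ⟩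
    have hvlt : ∀ j : ZMod (ℓ + 1), j.val < ℓ + 1 := fun j => ZMod.val_lt j
    have hvinj : ∀ i j : ZMod (ℓ + 1), i.val = j.val → i = j :=
      fun i j h => ZMod.val_injective _ h
    have hsucc : ∀ j : ZMod (ℓ + 1), (j + 1).val = (j.val + 1) % (ℓ + 1) := by
      intro j; rw [ZMod.val_add, ZMod.val_one]
    have hcastval : ∀ n : ℕ, n < ℓ → ((n : ZMod ℓ)).val = n :=
      fun n h => ZMod.val_cast_of_lt h
    have hdvd : ∀ n : ℕ, (n : ZMod ℓ) = 0 → ℓ ∣ n :=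
      fun n h => (ZMod.natCast_eq_zero_iff n ℓ).mp h
    set d : ZMod (ℓ + 1) → V :=
      fun j => if j.val < ℓ then c (((j.val : ℕ) : ZMod ℓ) + (i₀ + 1)) else v with hd
    have hd1 : ∀ j : ZMod (ℓ + 1), j.val < ℓ →
        d j = c (((j.val : ℕ) : ZMod ℓ) + (i₀ + 1)) := fun j h => if_pos h
    have hd2 : ∀ j : ZMod (ℓ + 1), j.val = ℓ → d j = v := fun j h => if_neg (by omega)
    -- a key val computation: when does `↑j.val + (i₀+1) = i₀`?
    have hkey : ∀ n : ℕ, n < ℓ → ((n : ZMod ℓ) + (i₀ + 1) = i₀ ↔ n = ℓ - 1) := by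
      intro n hn
      constructor
      · intro h
        have h0 : ((n + 1 : ℕ) : ZMod ℓ) = 0 := by push_cast; linear_combination h
        have := Nat.le_of_dvd (by omega) (hdvd _ h0)
        omega
      · intro h
        subst h
        have h0 : ((ℓ - 1 + 1 : ℕ) : ZMod ℓ) = 0 := by
          rw [show ℓ - 1 + 1 = ℓ by omega, ZMod.natCast_self]
        rw [Nat.cast_add, Nat.cast_one] at h0
        linear_combination h0
    have hkey2 : ∀ n : ℕ, n < ℓ → ((n : ZMod ℓ) + (i₀ + 1) = i₀ + 1 ↔ n = 0) := by
      intro n hn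
      constructor
      · intro h
        have h0 : (n : ZMod ℓ) = 0 := by linear_combination h
        have := hcastval n hn
        rw [h0, ZMod.val_zero] at this
        omega
      · intro h; subst h; simp
    have hq' : q ≤ ℓ + 1 := by
      apply hGc (ℓ + 1)
      refine ⟨by omega, d, ?_, ?_, ?_⟩
      · -- injectivity
        intro i j h
        by_cases hi : i.val < ℓ <;> by_cases hj : j.val < ℓ
        · rw [hd1 i hi, hd1 j hj] at h
          have := add_right_cancel (hinj h)
          apply hvinj
          rw [← hcastval i.val hi, ← hcastval j.val hj, this]
        · rw [hd1 i hi, hd2 j (by have := hvlt j; omega)] at h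
          exact absurd h (hcv _)
        · rw [hd2 i (by have := hvlt i; omega), hd1 j hj] at h
          exact absurd h.symm (hcv _)
        · apply hvinj; have := hvlt i; have := hvlt j; omega
      · -- edges
        intro j
        rw [SimpleGraph.compl_adj]
        by_cases h1 : j.val + 1 < ℓ
        · have hs : (j + 1).val = j.val + 1 := by
            rw [hsucc]; exact Nat.mod_eq_of_lt (by omega)
          rw [hd1 j (by omega), hd1 (j + 1) (by omega), hs]
          have harg : (((j.val + 1 : ℕ) : ZMod ℓ)) + (i₀ + 1) =
              (((j.val : ℕ) : ZMod ℓ) + (i₀ + 1)) + 1 := by push_cast; ring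
          rw [harg]
          constructor
          · intro he
            exact h10 (by linear_combination -(hinj he))
          · apply hgood
            intro he
            have h0 : ((j.val + 1 : ℕ) : ZMod ℓ) = 0 := by push_cast; linear_combination he
            have := Nat.le_of_dvd (by omega) (hdvd _ h0)
            omega
        · by_cases h2 : j.val + 1 = ℓ
          · have hs : (j + 1).val = ℓ := by
              rw [hsucc, h2]; exact Nat.mod_eq_of_lt (by omega)
            rw [hd1 j (by omega), hd2 (j + 1) hs]
            have harg : (((j.val : ℕ) : ZMod ℓ)) + (i₀ + 1) = i₀ :=
              (hkey j.val (by omega)).mpr (by omega)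
            rw [harg]
            exact ⟨hcv i₀, fun h => ho1 h.symm⟩
          · have hjv : j.val = ℓ := by have := hvlt j; omega
            have hs : (j + 1).val = 0 := by
              rw [hsucc, hjv]; simp
            rw [hd2 j hjv, hd1 (j + 1) (by omega), hs]
            have harg : (((0 : ℕ) : ZMod ℓ)) + (i₀ + 1) = i₀ + 1 := by simp
            rw [harg]
            exact ⟨Ne.symm (hcv _), ho2⟩
      · -- no chords
        intro i j h1 h2 h3
        rw [SimpleGraph.compl_adj]
        rintro ⟨hne, hnadj⟩
        apply hnadj
        by_cases hi : i.val < ℓ <;> by_cases hj : j.val < ℓ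
        · -- both on the old cycle
          rw [hd1 i hi, hd1 j hj]
          by_cases hsp1 : i.val = ℓ - 1 ∧ j.val = 0
          · rw [(hkey i.val hi).mpr hsp1.1, (hkey2 j.val hj).mpr hsp1.2]
            exact hbad
          · by_cases hsp2 : i.val = 0 ∧ j.val = ℓ - 1
            · rw [(hkey2 i.val hi).mpr hsp2.1, (hkey j.val hj).mpr hsp2.2]
              exact hbad.symm
            · refine (hchordG _ _ ?_ ?_ ?_).1
              · intro he
                have hb : ((j.val : ℕ) : ZMod ℓ) = ((i.val : ℕ) : ZMod ℓ) := by
                  linear_combination he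
                have : j.val = i.val := by
                  rw [← hcastval j.val hj, ← hcastval i.val hi, hb]
                exact h1 (hvinj _ _ this)
              · intro he
                have hb : ((j.val : ℕ) : ZMod ℓ) = ((i.val : ℕ) : ZMod ℓ) + 1 := by
                  linear_combination he
                have hval : j.val = (i.val + 1) % ℓ := by
                  rw [← hcastval j.val hj, hb, ZMod.val_add, ZMod.val_one,
                    hcastval i.val hi]
                by_cases hc : i.val + 1 < ℓ
                · rw [Nat.mod_eq_of_lt hc] at hval
                  apply h2
                  apply hvinj
                  rw [hsucc, Nat.mod_eq_of_lt (by omega), hval]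
                · have : i.val + 1 = ℓ := by omega
                  rw [this, Nat.mod_self] at hval
                  exact hsp1 ⟨by omega, hval⟩
              · intro he
                have hb : ((i.val : ℕ) : ZMod ℓ) = ((j.val : ℕ) : ZMod ℓ) + 1 := by
                  linear_combination he
                have hval : i.val = (j.val + 1) % ℓ := by
                  rw [← hcastval i.val hi, hb, ZMod.val_add, ZMod.val_one,
                    hcastval j.val hj]
                by_cases hc : j.val + 1 < ℓ
                · rw [Nat.mod_eq_of_lt hc] at hval
                  apply h3
                  apply hvinj
                  rw [hsucc, Nat.mod_eq_of_lt (by omega), hval]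
                · have : j.val + 1 = ℓ := by omega
                  rw [this, Nat.mod_self] at hval
                  exact hsp2 ⟨hval, by omega⟩
        · -- i on the old cycle, d j = v
          rw [hd1 i hi, hd2 j (by have := hvlt j; omega)]
          refine (hnbr _ ?_ ?_).symm
          · intro he
            have hiv : i.val = ℓ - 1 := (hkey i.val hi).mp he
            apply h2
            apply hvinj
            have hjv : j.val = ℓ := by have := hvlt j; omega
            rw [hsucc, hiv, show ℓ - 1 + 1 = ℓ by omega, Nat.mod_eq_of_lt (by omega), hjv]
          · intro he
            have hiv : i.val = 0 := (hkey2 i.val hi).mp he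
            apply h3
            apply hvinj
            have hjv : j.val = ℓ := by have := hvlt j; omega
            rw [hsucc, hjv, Nat.mod_self, hiv]
        · -- d i = v, j on the old cycle
          rw [hd2 i (by have := hvlt i; omega), hd1 j hj]
          refine hnbr _ ?_ ?_
          · intro he
            have : j.val = ℓ - 1 := (hkey j.val hj).mp he
            apply h3
            apply hvinj
            rw [hsucc, Nat.mod_eq_of_lt (by omega), this]
            have := hvlt i; omega
          · intro he
            have : j.val = 0 := (hkey2 j.val hj).mp he
            apply h2
            apply hvinj
            rw [hsucc]
            have hiv : i.val = ℓ := by have := hvlt i; omega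
            rw [hiv, Nat.mod_self, this]
        · exact absurd (hvinj i j (by have := hvlt i; have := hvlt j; omega)).symm h1
    omega
  · -- no bad edge: c itself is a minimal cycle in Gᶜ
    push_neg at hbadE
    have hq' : q ≤ ℓ := by
      apply hGc ℓ
      refine ⟨hℓ4, c, hinj, ?_, ?_⟩
      · intro m
        rw [SimpleGraph.compl_adj]
        exact ⟨fun he => h10 (by linear_combination -(hinj he)), hbadE m⟩
      · intro i j h1 h2 h3
        rw [SimpleGraph.compl_adj]
        rintro ⟨hne, hna⟩
        exact hna (hchordG i j h1 h2 h3).1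
    omega
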